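/- Let E = L^2(T), 𝔣, 𝔤 ∈ E*, α ∈ R(T)_+ and x ∈ E_+. Then the Riesz–Kantorovich supremum satisfies (𝔣 ∨ 𝔤)(αx) = α·(𝔣 ∨ 𝔤)(x), where the key step uses the canonical partial inverse β of α in the universally complete f-algebra R(T) (with αβ = P_α e) to transform decompositions y + z = αx into decompositions of P_α x. -/

import Mathlib

/-!
Common setup.  `E` models the universal completion `E_u` of the `T`-universally
complete Riesz space `L¹(T)`: a Dedekind complete (conditionally complete)
`f`-algebra whose multiplicative unit `1 = e = Te` is a weak order unit.
`T : E → E` models the strictly positive conditional expectation operator,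
`L1 ⊆ E` its natural domain `L¹(T)`, `L2 L1` the space `L²(T)` and `RT T` the
range `R(T)` of `T`.
-/

variable {E : Type*}

/-- The range `R(T)` of the conditional expectation operator. -/
def RT (T : E → E) : Set E := Set.range T

/-- `L²(T) = {f ∈ L¹(T) : f² ∈ L¹(T)}`, the product taken in the `f`-algebra `E_u`. -/
def L2 [Mul E] (L1 : Set E) : Set E := {f | f ∈ L1 ∧ f * f ∈ L1}

variable [CommRing E] [ConditionallyCompleteLattice E]

/-- `T` is a strictly positive conditional expectation operator on the
`T`-universally complete space `L¹(T)` (modelled by the set `L1` inside the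
Dedekind complete `f`-algebra `E`), with `1 = e = Te` a weak order unit. -/
structure IsCondExp (T : E → E) (L1 : Set E) : Prop where
  /-- compatibility of the order with addition -/
  addLe : ∀ a b c : E, a ≤ b → a + c ≤ b + c
  /-- products of positive elements are positive -/
  mulPos : ∀ a b : E, 0 ≤ a → 0 ≤ b → 0 ≤ a * b
  /-- the `f`-algebra property -/
  fAlg : ∀ a b c : E, a ⊓ b = 0 → 0 ≤ c → (c * a) ⊓ b = 0
  /-- `1 = e` is a weak order unit -/
  weakUnit : ∀ x : E, 0 ≤ x → x ⊓ 1 = 0 → x = 0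
  /-- `T` is additive -/
  addT : ∀ a b : E, T (a + b) = T a + T b
  /-- `T` is positive -/
  posT : ∀ a : E, 0 ≤ a → 0 ≤ T a
  /-- `T` is strictly positive -/
  strictT : ∀ a : E, 0 ≤ a → T a = 0 → a = 0
  /-- `T` is a projection -/
  projT : ∀ a : E, T (T a) = T a
  /-- `T` maps the weak order unit `e = 1` to itself -/
  unitT : T 1 = 1
  /-- `T` is an averaging operator: `T(T a · b) = T a · T b` -/
  avgT : ∀ a b : E, T (T a * b) = T a * T b
  /-- `T` is order continuous -/
  ordContT : ∀ S : Set E, S.Nonempty → DirectedOn (· ≥ ·) S → (∀ x ∈ S, 0 ≤ x) →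
      IsGLB S 0 → IsGLB (T '' S) 0
  /-- `L¹(T)` is closed under addition -/
  l1add : ∀ a ∈ L1, ∀ b ∈ L1, a + b ∈ L1
  /-- `L¹(T)` is solid -/
  l1sol : ∀ a ∈ L1, ∀ b : E, |b| ≤ |a| → b ∈ L1
  /-- `R(T) ⊆ L¹(T)` and `T` maps `L¹(T)` into itself -/
  rtL1 : ∀ a : E, T a ∈ L1
  /-- `L²(T)` is an `R(T)`-module -/
  l2mod : ∀ α ∈ RT T, ∀ x ∈ L2 L1, α * x ∈ L2 L1
  /-- `T`-universal completeness of `L¹(T)` -/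
  tuc : ∀ S : Set E, S.Nonempty → (∀ x ∈ S, 0 ≤ x ∧ x ∈ L1) → DirectedOn (· ≤ ·) S →
      BddAbove (T '' S) → BddAbove S ∧ sSup S ∈ L1

/-- `sqrt` is a square-root function on the positive cone of the `f`-algebra. -/
def IsSqrt (sqrt : E → E) : Prop := ∀ a : E, 0 ≤ a → 0 ≤ sqrt a ∧ sqrt a * sqrt a = a

/-- The `R(T)`-valued norm `‖f‖_{T,2} = (T (f²))^{1/2}` on `L²(T)`. -/
def nrm (T : E → E) (sqrt : E → E) (f : E) : E := sqrt (T (f * f))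

/-- A `T`-linear functional on `E = L²(T)`: `R(T)`-valued, additive,
`R(T)`-homogeneous and order bounded.  The set of these is the `T`-dual `E*`. -/
def TLinear (T : E → E) (L1 : Set E) (F : E → E) : Prop :=
  (∀ x ∈ L2 L1, F x ∈ RT T) ∧
  (∀ x ∈ L2 L1, ∀ y ∈ L2 L1, F (x + y) = F x + F y) ∧
  (∀ α ∈ RT T, ∀ x ∈ L2 L1, F (α * x) = α * F x) ∧
  (∀ x ∈ L2 L1, 0 ≤ x → ∃ b : E, ∀ y ∈ L2 L1, |y| ≤ x → |F y| ≤ b)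

/-- `T`-strong boundedness: `|F x| ≤ k ‖x‖_{T,2}` for some `k ∈ R(T)₊`. -/
def StronglyBdd (T : E → E) (L1 : Set E) (sqrt : E → E) (F : E → E) : Prop :=
  ∃ k ∈ RT T, 0 ≤ k ∧ ∀ x ∈ L2 L1, |F x| ≤ k * nrm T sqrt x

/-- Membership in the `T`-strong dual `Ê` of `L²(T)`. -/
def MemEhat (T : E → E) (L1 : Set E) (sqrt : E → E) (F : E → E) : Prop :=
  TLinear T L1 F ∧ StronglyBdd T L1 sqrt F

/-- The Riesz representation map `Ψ(f)(g) = T (f g)`. -/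
def Psi (T : E → E) (f : E) : E → E := fun g => T (f * g)

/-- The Riesz–Kantorovich set `{F y + G z : y, z ∈ L²(T)₊, y + z = x}` whose
supremum is `(F ∨ G)(x)` and whose infimum is `(F ∧ G)(x)`. -/
def RKset (L1 : Set E) (F G : E → E) (x : E) : Set E :=
  {v | ∃ y z : E, y ∈ L2 L1 ∧ z ∈ L2 L1 ∧ 0 ≤ y ∧ 0 ≤ z ∧ y + z = x ∧ v = F y + G z}

/-- The partial order on functionals: `F ≤ G` iff `F x ≤ G x` for all `x ∈ L²(T)₊`. -/
def leF [Mul E] (L1 : Set E) (F G : E → E) : Prop := ∀ x ∈ L2 L1, 0 ≤ x → F x ≤ G x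


namespace S19
variable {E : Type*} [CommRing E] [ConditionallyCompleteLattice E]

theorem subLe (hadd : ∀ a b c : E, a ≤ b → a + c ≤ b + c) {a b : E} (h : 0 ≤ b - a) : a ≤ b := by
  calc a = 0 + a := by ring
    _ ≤ (b - a) + a := hadd _ _ _ h
    _ = b := by ring

theorem leSub (hadd : ∀ a b c : E, a ≤ b → a + c ≤ b + c) {a b : E} (h : a ≤ b) : 0 ≤ b - a := by
  calc (0:E) = a + -a := by ring
    _ ≤ b + -a := hadd _ _ _ h
    _ = b - a := by ring

theorem addle2 (hadd : ∀ a b c : E, a ≤ b → a + c ≤ b + c) {a b c d : E}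
    (h1 : a ≤ b) (h2 : c ≤ d) : a + c ≤ b + d := by
  calc a + c ≤ b + c := hadd _ _ _ h1
    _ = c + b := by ring
    _ ≤ d + b := hadd _ _ _ h2
    _ = b + d := by ring

theorem negle (hadd : ∀ a b c : E, a ≤ b → a + c ≤ b + c) {a b : E} (h : a ≤ b) : -b ≤ -a := by
  calc -b = a + -(a+b) := by ring
    _ ≤ b + -(a+b) := hadd _ _ _ h
    _ = -a := by ring

theorem mulMono (hadd : ∀ a b c : E, a ≤ b → a + c ≤ b + c)
    (hmul : ∀ a b : E, 0 ≤ a → 0 ≤ b → 0 ≤ a * b) {c a b : E}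
    (hc : 0 ≤ c) (h : a ≤ b) : c * a ≤ c * b := by
  apply subLe hadd
  calc (0:E) ≤ c * (b - a) := hmul _ _ hc (leSub hadd h)
    _ = c * b - c * a := by ring

theorem infAdd (hadd : ∀ a b c : E, a ≤ b → a + c ≤ b + c) (a b c : E) :
    (a + c) ⊓ (b + c) = a ⊓ b + c := by
  refine le_antisymm ?_ (le_inf (hadd _ _ _ inf_le_left) (hadd _ _ _ inf_le_right))
  have h1 : (a + c) ⊓ (b + c) + -c ≤ a := by
    calc (a + c) ⊓ (b + c) + -c ≤ (a + c) + -c := hadd _ _ _ inf_le_left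
      _ = a := by ring
  have h2 : (a + c) ⊓ (b + c) + -c ≤ b := by
    calc (a + c) ⊓ (b + c) + -c ≤ (b + c) + -c := hadd _ _ _ inf_le_right
      _ = b := by ring
  calc (a + c) ⊓ (b + c) = ((a + c) ⊓ (b + c) + -c) + c := by ring
    _ ≤ a ⊓ b + c := hadd _ _ _ (le_inf h1 h2)

theorem supAdd (hadd : ∀ a b c : E, a ≤ b → a + c ≤ b + c) (a b c : E) :
    (a + c) ⊔ (b + c) = a ⊔ b + c := by
  refine le_antisymm (sup_le (hadd _ _ _ le_sup_left) (hadd _ _ _ le_sup_right)) ?_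
  have h1 : a ≤ (a + c) ⊔ (b + c) + -c := by
    calc a = (a + c) + -c := by ring
      _ ≤ (a + c) ⊔ (b + c) + -c := hadd _ _ _ le_sup_left
  have h2 : b ≤ (a + c) ⊔ (b + c) + -c := by
    calc b = (b + c) + -c := by ring
      _ ≤ (a + c) ⊔ (b + c) + -c := hadd _ _ _ le_sup_right
  calc a ⊔ b + c ≤ ((a + c) ⊔ (b + c) + -c) + c := hadd _ _ _ (sup_le h1 h2)
    _ = (a + c) ⊔ (b + c) := by ring

theorem negInf (hadd : ∀ a b c : E, a ≤ b → a + c ≤ b + c) (a b : E) :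
    -(a ⊓ b) = (-a) ⊔ (-b) := by
  refine le_antisymm ?_ (sup_le (negle hadd inf_le_left) (negle hadd inf_le_right))
  have h1 : -((-a) ⊔ (-b)) ≤ a := by
    have := negle hadd (le_sup_left : -a ≤ (-a) ⊔ (-b)); rwa [neg_neg] at this
  have h2 : -((-a) ⊔ (-b)) ≤ b := by
    have := negle hadd (le_sup_right : -b ≤ (-a) ⊔ (-b)); rwa [neg_neg] at this
  have := negle hadd (le_inf h1 h2)
  rwa [neg_neg] at this

theorem infAddSup (hadd : ∀ a b c : E, a ≤ b → a + c ≤ b + c) (a b : E) :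
    a ⊓ b + (a ⊔ b) = a + b := by
  have h1 : a ⊓ b = -((-a) ⊔ (-b)) := by rw [← negInf hadd, neg_neg]
  have h2 : ((-a) + (a + b)) ⊔ ((-b) + (a + b)) = (-a) ⊔ (-b) + (a + b) := supAdd hadd _ _ _
  have h3 : ((-a) + (a + b)) ⊔ ((-b) + (a + b)) = a ⊔ b := by
    have e1 : (-a) + (a + b) = b := by ring
    have e2 : (-b) + (a + b) = a := by ring
    rw [e1, e2, sup_comm]
  rw [h1, ← h3, h2]; ring

theorem posInfNeg (hadd : ∀ a b c : E, a ≤ b → a + c ≤ b + c) (a : E) :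
    (a ⊔ 0) ⊓ ((-a) ⊔ 0) = 0 := by
  set m : E := (-a) ⊔ 0 with hm
  have hm' : a ⊓ 0 = -m := by
    have h := negInf hadd a 0
    rw [neg_zero] at h
    rw [hm, ← h, neg_neg]
  have hp : a ⊔ 0 = a + m := by
    have := supAdd hadd (-a) 0 a
    have e1 : (-a) + a = (0:E) := by ring
    rw [e1, zero_add] at this
    rw [sup_comm] at this
    rw [this]; ring
  have h2 := infAdd hadd a 0 m
  rw [zero_add] at h2
  rw [hp, h2, hm']; ring

theorem posSubNeg (hadd : ∀ a b c : E, a ≤ b → a + c ≤ b + c) (a : E) :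
    (a ⊔ 0) - ((-a) ⊔ 0) = a := by
  have hm' : a ⊓ 0 = -((-a) ⊔ 0) := by
    have h := negInf hadd a 0
    rw [neg_zero] at h
    rw [← h, neg_neg]
  have h := infAddSup hadd a 0
  rw [add_zero] at h
  calc (a ⊔ 0) - ((-a) ⊔ 0) = a ⊓ 0 + (a ⊔ 0) := by rw [hm']; ring
    _ = a := h

theorem sqNonneg (hadd : ∀ a b c : E, a ≤ b → a + c ≤ b + c)
    (hmul : ∀ a b : E, 0 ≤ a → 0 ≤ b → 0 ≤ a * b)
    (hfa : ∀ a b c : E, a ⊓ b = 0 → 0 ≤ c → (c * a) ⊓ b = 0) (a : E) :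
    0 ≤ a * a := by
  set p : E := a ⊔ 0 with hpd
  set m : E := (-a) ⊔ 0 with hmd
  have hp0 : (0:E) ≤ p := le_sup_right
  have hm0 : (0:E) ≤ m := le_sup_right
  have hpm : p ⊓ m = 0 := posInfNeg hadd a
  have h1 : (p * m) ⊓ p = 0 := hfa m p p (by rw [inf_comm]; exact hpm) hp0
  have h2 : (m * p) ⊓ (p * m) = 0 := hfa p (p * m) m (by rw [inf_comm]; exact h1) hm0
  rw [mul_comm m p, inf_idem] at h2
  have hd : p - m = a := posSubNeg hadd a
  have hsq : a * a = p * p + m * m := by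
    calc a * a = (p - m) * (p - m) := by rw [hd]
      _ = p * p + m * m - (p * m + p * m) := by ring
      _ = p * p + m * m := by rw [h2]; ring
  rw [hsq]
  calc (0:E) = 0 + 0 := by ring
    _ ≤ p * p + m * m := addle2 hadd (hmul _ _ hp0 hp0) (hmul _ _ hm0 hm0)

theorem nsmulMono (hadd : ∀ a b c : E, a ≤ b → a + c ≤ b + c) {a b : E} (h : a ≤ b) :
    ∀ n : ℕ, n • a ≤ n • b := by
  intro n
  induction n with
  | zero => rw [zero_nsmul, zero_nsmul]
  | succ n ih =>
      rw [succ_nsmul, succ_nsmul]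
      exact addle2 hadd ih h

theorem arch (hadd : ∀ a b c : E, a ≤ b → a + c ≤ b + c) {c : E}
    (h0 : 0 ≤ c) (h : ∀ n : ℕ, n • c ≤ 1) : c = 0 := by
  set S : Set E := Set.range (fun n : ℕ => n • c) with hS
  have hne : S.Nonempty := ⟨0 • c, ⟨0, rfl⟩⟩
  have hbdd : BddAbove S := ⟨1, by rintro _ ⟨n, rfl⟩; exact h n⟩
  have hstep : ∀ n : ℕ, n • c ≤ sSup S - c := by
    intro n
    have h1 : (n + 1) • c ≤ sSup S := le_csSup hbdd ⟨n + 1, rfl⟩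
    rw [succ_nsmul] at h1
    calc n • c = (n • c + c) + -c := by ring
      _ ≤ sSup S + -c := hadd _ _ _ h1
      _ = sSup S - c := by ring
  have hsle : sSup S ≤ sSup S - c := csSup_le hne (by rintro _ ⟨n, rfl⟩; exact hstep n)
  have hc0 : c ≤ 0 := by
    calc c = sSup S + (c - sSup S) := by ring
      _ ≤ (sSup S - c) + (c - sSup S) := hadd _ _ _ hsle
      _ = 0 := by ring
  exact le_antisymm hc0 h0

end S19

/-- For `F, G ∈ E*`, `α ∈ R(T)₊` and `x ∈ E₊`, the
Riesz–Kantorovich supremum is `R(T)₊`-homogeneous: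
`(F ∨ G)(αx) = α (F ∨ G)(x)`.  The key step uses the canonical partial inverse
`β` of `α` in the universally complete `f`-algebra `R(T)`, with
`α β = P_α e = sup_n (n α ⊓ e)`. -/
theorem stmt19 (T : E → E) (L1 : Set E) (hT : IsCondExp T L1)
    (F G : E → E) (hF : TLinear T L1 F) (hG : TLinear T L1 G)
    (α : E) (hα : α ∈ RT T) (hα0 : 0 ≤ α)
    -- `β` is the canonical partial inverse of `α` in `R(T)`:
    (β : E) (hβ : β ∈ RT T) (hβ0 : 0 ≤ β)
    (hβinv : α * β = ⨆ n : ℕ, ((n • α) ⊓ 1))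
    (x : E) (hx : x ∈ L2 L1) (hx0 : 0 ≤ x)
    (v : E) (hv : IsLUB (RKset L1 F G x) v) :
    IsLUB (RKset L1 F G (α * x)) (α * v) := by
  obtain ⟨hFrt, hFadd, hFhom, hFbd⟩ := hF
  obtain ⟨hGrt, hGadd, hGhom, hGbd⟩ := hG
  have hadd := hT.addLe
  have hmul := hT.mulPos
  -- T 0 = 0 and RT closure facts
  have hT0 : T 0 = 0 := by
    have h := hT.addT 0 0
    rw [add_zero] at h
    exact left_eq_add.mp h
  have hrt1 : (1:E) ∈ RT T := ⟨1, hT.unitT⟩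
  have rtMul : ∀ a ∈ RT T, ∀ b ∈ RT T, a * b ∈ RT T := by
    rintro _ ⟨a, rfl⟩ _ ⟨b, rfl⟩
    exact ⟨T a * b, hT.avgT a b⟩
  have rtSub : ∀ a ∈ RT T, ∀ b ∈ RT T, a - b ∈ RT T := by
    rintro _ ⟨a, rfl⟩ _ ⟨b, rfl⟩
    refine ⟨a - b, ?_⟩
    have h := hT.addT (a - b) b
    rw [sub_add_cancel] at h
    rw [h]; ring
  -- L2 facts
  have hL20 : (0:E) ∈ L2 L1 := by
    have h01 : (0:E) ∈ L1 := hT0 ▸ hT.rtL1 0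
    exact ⟨h01, by rw [zero_mul]; exact h01⟩
  have sqnn : ∀ a : E, 0 ≤ a * a := S19.sqNonneg hadd hmul hT.fAlg
  have habs : ∀ a : E, 0 ≤ a → |a| = a := by
    intro a ha
    have h1 : -a ≤ a := by
      have := S19.negle hadd ha
      rw [neg_zero] at this
      exact le_trans this ha
    exact sup_eq_left.mpr h1
  have l2add : ∀ a ∈ L2 L1, ∀ b ∈ L2 L1, a + b ∈ L2 L1 := by
    intro a ha b hb
    refine ⟨hT.l1add a ha.1 b hb.1, ?_⟩
    have hbig : (a * a + b * b) + (a * a + b * b) ∈ L1 :=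
      hT.l1add _ (hT.l1add _ ha.2 _ hb.2) _ (hT.l1add _ ha.2 _ hb.2)
    apply hT.l1sol _ hbig
    have hs : 0 ≤ (a + b) * (a + b) := sqnn _
    have hbig0 : 0 ≤ (a * a + b * b) + (a * a + b * b) := by
      calc (0:E) = (0 + 0) + (0 + 0) := by ring
        _ ≤ (a * a + b * b) + (a * a + b * b) :=
          S19.addle2 hadd (S19.addle2 hadd (sqnn a) (sqnn b))
            (S19.addle2 hadd (sqnn a) (sqnn b))
    rw [habs _ hs, habs _ hbig0]
    apply S19.subLe hadd
    calc (0:E) ≤ (a - b) * (a - b) := sqnn _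
      _ = ((a * a + b * b) + (a * a + b * b)) - (a + b) * (a + b) := by ring
  have hF0 : F 0 = 0 := by
    have h := hFadd 0 hL20 0 hL20
    rw [add_zero] at h
    exact left_eq_add.mp h
  have hG0 : G 0 = 0 := by
    have h := hGadd 0 hL20 0 hL20
    rw [add_zero] at h
    exact left_eq_add.mp h
  -- the band projection P and its complement Q
  set P : E := α * β with hP
  set Q : E := 1 - P with hQ
  have hPrt : P ∈ RT T := rtMul α hα β hβ
  have hQrt : Q ∈ RT T := rtSub 1 hrt1 P hPrt
  have one0 : (0:E) ≤ 1 := by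
    have := sqnn 1; rwa [one_mul] at this
  have hbddS : BddAbove (Set.range fun n : ℕ => (n • α) ⊓ (1:E)) :=
    ⟨1, by rintro _ ⟨n, rfl⟩; exact inf_le_right⟩
  have hPle1 : P ≤ 1 := by
    rw [hβinv]
    exact ciSup_le fun n => inf_le_right
  have hnle : ∀ n : ℕ, (n • α) ⊓ 1 ≤ P := by
    intro n
    rw [hβinv]
    exact le_ciSup hbddS n
  have hP0 : (0:E) ≤ P := by
    have h := hnle 0
    rwa [zero_nsmul, inf_eq_left.mpr one0] at h
  have hQ0 : (0:E) ≤ Q := S19.leSub hadd hPle1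
  have hQle1 : Q ≤ 1 := by
    apply S19.subLe hadd
    calc (0:E) ≤ P := hP0
      _ = 1 - Q := by rw [hQ]; ring
  -- Q ⊓ α = 0 via the Archimedean property
  have hQα : Q ⊓ α = 0 := by
    set c : E := Q ⊓ α ⊓ 1 with hc
    have hc0 : (0:E) ≤ c := le_inf (le_inf hQ0 hα0) one0
    have hcQ : c ≤ Q := le_trans inf_le_left inf_le_left
    have hcα : c ≤ α := le_trans inf_le_left inf_le_right
    have key : ∀ n : ℕ, n • c ≤ 1 := by
      intro n
      induction n with
      | zero => rw [zero_nsmul]; exact one0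
      | succ n ih =>
          have h1 : n • c ≤ (n • α) ⊓ 1 := le_inf (S19.nsmulMono hadd hcα n) ih
          have h2 : n • c ≤ P := le_trans h1 (hnle n)
          have h3 : c ≤ 1 - n • c := by
            refine le_trans hcQ ?_
            calc Q = (1 - P) := hQ
              _ = (1 - n • c) + (n • c - P) := by ring
              _ ≤ (1 - n • c) + 0 := by
                  have := S19.negle hadd h2
                  have h4 : n • c - P ≤ 0 := by
                    calc n • c - P = n • c + -P := by ring
                      _ ≤ n • c + -(n • c) := by
                          have h5 := hadd _ _ (n • c) this
                          calc n • c + -P = -P + n • c := by ring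
                            _ ≤ -(n • c) + n • c := h5
                            _ = n • c + -(n • c) := by ring
                      _ = 0 := by ring
                  calc (1 - n • c) + (n • c - P) = (n • c - P) + (1 - n • c) := by ring
                    _ ≤ 0 + (1 - n • c) := hadd _ _ _ h4
                    _ = (1 - n • c) + 0 := by ring
              _ = 1 - n • c := by ring
          calc (n + 1) • c = n • c + c := succ_nsmul c n
            _ = c + n • c := by ring
            _ ≤ (1 - n • c) + n • c := hadd _ _ _ h3
            _ = 1 := by ring
    have hczero : c = 0 := S19.arch hadd hc0 key
    exact hT.weakUnit _ (le_inf hQ0 hα0) (hc ▸ hczero)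
  have hαQ : α * Q = 0 := by
    have h1 := hT.fAlg Q α α hQα hα0
    have h2 : α * Q ≤ α := by
      calc α * Q ≤ α * 1 := S19.mulMono hadd hmul hα0 hQle1
        _ = α := mul_one α
    rwa [inf_eq_left.mpr h2] at h1
  have hPα : P * α = α := by
    have h : P * α = α - Q * α := by rw [hQ]; ring
    rw [h, mul_comm Q α, hαQ, sub_zero]
  constructor
  · -- α v is an upper bound
    rintro w ⟨y, z, hy2, hz2, hy0, hz0, hyz, rfl⟩
    have hyle : y ≤ α * x := by
      apply S19.subLe hadd
      calc (0:E) ≤ z := hz0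
        _ = α * x - y := by rw [← hyz]; ring
    have hzle : z ≤ α * x := by
      apply S19.subLe hadd
      calc (0:E) ≤ y := hy0
        _ = α * x - z := by rw [← hyz]; ring
    have hQmulzero : ∀ u : E, 0 ≤ u → u ≤ α * x → Q * u = 0 := by
      intro u hu0 hu
      have h1 : 0 ≤ Q * u := hmul _ _ hQ0 hu0
      have h2 : Q * u ≤ Q * (α * x) := S19.mulMono hadd hmul hQ0 hu
      have h3 : Q * (α * x) = 0 := by
        calc Q * (α * x) = (α * Q) * x := by ring
          _ = 0 := by rw [hαQ, zero_mul]
      exact le_antisymm (h3 ▸ h2) h1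
    have hQy : Q * y = 0 := hQmulzero y hy0 hyle
    have hQz : Q * z = 0 := hQmulzero z hz0 hzle
    set y' : E := β * y + Q * x with hy'
    set z' : E := β * z with hz'
    have hy'2 : y' ∈ L2 L1 :=
      l2add _ (hT.l2mod β hβ y hy2) _ (hT.l2mod Q hQrt x hx)
    have hz'2 : z' ∈ L2 L1 := hT.l2mod β hβ z hz2
    have hy'0 : 0 ≤ y' := by
      calc (0:E) = 0 + 0 := by ring
        _ ≤ β * y + Q * x := S19.addle2 hadd (hmul _ _ hβ0 hy0) (hmul _ _ hQ0 hx0)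
    have hz'0 : 0 ≤ z' := hmul _ _ hβ0 hz0
    have hsum : y' + z' = x := by
      have e1 : y' + z' = β * (y + z) + Q * x := by rw [hy', hz']; ring
      rw [e1, hyz, hQ, hP]; ring
    have hle : F y' + G z' ≤ v := hv.1 ⟨y', z', hy'2, hz'2, hy'0, hz'0, hsum, rfl⟩
    have hay' : α * y' = y := by
      calc α * y' = P * y + (α * Q) * x := by rw [hy', hP]; ring
        _ = P * y := by rw [hαQ, zero_mul, add_zero]
        _ = y - Q * y := by rw [hQ]; ring
        _ = y := by rw [hQy, sub_zero]
    have haz' : α * z' = z := by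
      calc α * z' = P * z := by rw [hz', hP]; ring
        _ = z - Q * z := by rw [hQ]; ring
        _ = z := by rw [hQz, sub_zero]
    calc F y + G z = F (α * y') + G (α * z') := by rw [hay', haz']
      _ = α * F y' + α * G z' := by rw [hFhom α hα y' hy'2, hGhom α hα z' hz'2]
      _ = α * (F y' + G z') := by ring
      _ ≤ α * v := S19.mulMono hadd hmul hα0 hle
  · -- least upper bound
    rintro b hb
    have hαx2 : α * x ∈ L2 L1 := hT.l2mod α hα x hx
    have hαx0 : 0 ≤ α * x := hmul _ _ hα0 hx0
    have hw0mem : F (α * x) + G 0 ∈ RKset L1 F G (α * x) :=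
      ⟨α * x, 0, hαx2, hL20, hαx0, le_rfl, add_zero _, rfl⟩
    have hw0le : F (α * x) ≤ b := by
      have h := hb hw0mem
      rwa [hG0, add_zero] at h
    have hPαx : P * (α * x) = α * x := by rw [← mul_assoc, hPα]
    have hQP : Q * P = 0 := by
      calc Q * P = (α * Q) * β := by rw [hP]; ring
        _ = 0 := by rw [hαQ, zero_mul]
    have hQw0 : Q * F (α * x) = 0 := by
      have h1 := hFhom P hPrt (α * x) hαx2
      rw [hPαx] at h1
      calc Q * F (α * x) = Q * (P * F (α * x)) := by rw [← h1]
        _ = (Q * P) * F (α * x) := by ring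
        _ = 0 := by rw [hQP, zero_mul]
    have hQb : 0 ≤ Q * b := by
      calc (0:E) ≤ Q * (b - F (α * x)) := hmul _ _ hQ0 (S19.leSub hadd hw0le)
        _ = Q * b - Q * F (α * x) := by ring
        _ = Q * b := by rw [hQw0, sub_zero]
    have hub : v ≤ β * b + Q * v := by
      apply hv.2
      rintro w ⟨y, z, hy2, hz2, hy0, hz0, hyz, rfl⟩
      have hmem' : F (α * y) + G (α * z) ∈ RKset L1 F G (α * x) :=
        ⟨α * y, α * z, hT.l2mod α hα y hy2, hT.l2mod α hα z hz2,
          hmul _ _ hα0 hy0, hmul _ _ hα0 hz0, by rw [← mul_add, hyz], rfl⟩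
      have h1 : α * (F y + G z) ≤ b := by
        have h := hb hmem'
        rw [hFhom α hα y hy2, hGhom α hα z hz2] at h
        calc α * (F y + G z) = α * F y + α * G z := by ring
          _ ≤ b := h
      have h2 : P * (F y + G z) ≤ β * b := by
        calc P * (F y + G z) = β * (α * (F y + G z)) := by rw [hP]; ring
          _ ≤ β * b := S19.mulMono hadd hmul hβ0 h1
      have h3 : Q * (F y + G z) ≤ Q * v :=
        S19.mulMono hadd hmul hQ0 (hv.1 ⟨y, z, hy2, hz2, hy0, hz0, hyz, rfl⟩)
      calc F y + G z = P * (F y + G z) + Q * (F y + G z) := by rw [hQ]; ring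
        _ ≤ β * b + Q * v := S19.addle2 hadd h2 h3
    calc α * v ≤ α * (β * b + Q * v) := S19.mulMono hadd hmul hα0 hub
      _ = P * b + (α * Q) * v := by rw [hP]; ring
      _ = P * b := by rw [hαQ, zero_mul, add_zero]
      _ = b - Q * b := by rw [hQ]; ring
      _ ≤ b := by
          apply S19.subLe hadd
          calc (0:E) ≤ Q * b := hQb
            _ = b - (b - Q * b) := by ring
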